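/- For two non-negative, coordinate-wise monotone increasing integrable functions X, Y on [0,1]^N with uniform measure μ, E_μ[XY] ≥ E_μ[X]·E_μ[Y]. -/

import Mathlib

open MeasureTheory

noncomputable def cube (n : ℕ) : Measure (Fin n → ℝ) :=
  Measure.pi fun _ : Fin n => volume.restrict (Set.Icc 0 1)

instance : IsProbabilityMeasure (volume.restrict (Set.Icc (0:ℝ) 1)) :=
  ⟨by simp [Real.volume_Icc]⟩

instance (n : ℕ) : IsProbabilityMeasure (cube n) := by
  unfold cube; infer_instance

lemma cube_ae (n : ℕ) : ∀ᵐ x ∂cube n, ∀ i, x i ∈ Set.Icc (0:ℝ) 1 := by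
  have hS : MeasurableSet (Set.pi Set.univ fun _ : Fin n => Set.Icc (0:ℝ) 1) :=
    MeasurableSet.univ_pi fun _ => measurableSet_Icc
  have h1 : cube n (Set.pi Set.univ fun _ : Fin n => Set.Icc (0:ℝ) 1) = 1 := by
    rw [cube, Measure.pi_pi]
    simp [Measure.restrict_apply_self, Real.volume_Icc]
  have : ∀ᵐ x ∂cube n, x ∈ Set.pi Set.univ fun _ : Fin n => Set.Icc (0:ℝ) 1 := by
    rw [ae_iff]
    have : {x : Fin n → ℝ | ¬ x ∈ Set.pi Set.univ fun _ : Fin n => Set.Icc (0:ℝ) 1}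
        = (Set.pi Set.univ fun _ : Fin n => Set.Icc (0:ℝ) 1)ᶜ := rfl
    rw [this, prob_compl_eq_zero_iff hS]
    exact h1
  filter_upwards [this] with x hx i
  exact hx i (Set.mem_univ i)

lemma mono_integrable (n : ℕ) (X : (Fin n → ℝ) → ℝ) (hmeas : Measurable X)
    (hpos : ∀ x, 0 ≤ X x) (hmono : Monotone X) : Integrable X (cube n) := by
  apply Integrable.mono' (integrable_const (X fun _ => 1)) hmeas.aestronglyMeasurable
  filter_upwards [cube_ae n] with x hx
  rw [Real.norm_of_nonneg (hpos x)]
  exact hmono fun i => (hx i).2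

/-- One-dimensional Chebyshev correlation inequality via the two-point trick. -/
lemma cheb {α : Type*} [MeasurableSpace α] (μ : Measure α) [IsProbabilityMeasure μ]
    (f g : α → ℝ) (hf : Integrable f μ) (hg : Integrable g μ)
    (hfg : Integrable (fun x => f x * g x) μ)
    (h : ∀ x y, 0 ≤ (f x - f y) * (g x - g y)) :
    (∫ x, f x ∂μ) * (∫ x, g x ∂μ) ≤ ∫ x, f x * g x ∂μ := by
  have i1 : Integrable (fun z : α × α => (f z.1 * g z.1) * 1) (μ.prod μ) :=
    hfg.mul_prod (integrable_const 1)
  have i2 : Integrable (fun z : α × α => 1 * (f z.2 * g z.2)) (μ.prod μ) :=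
    (integrable_const 1).mul_prod hfg
  have i3 : Integrable (fun z : α × α => f z.1 * g z.2) (μ.prod μ) := hf.mul_prod hg
  have i4 : Integrable (fun z : α × α => g z.1 * f z.2) (μ.prod μ) := hg.mul_prod hf
  have key : 0 ≤ ∫ z : α × α, (f z.1 - f z.2) * (g z.1 - g z.2) ∂(μ.prod μ) :=
    integral_nonneg fun z => h z.1 z.2
  have expand : ∫ z : α × α, (f z.1 - f z.2) * (g z.1 - g z.2) ∂(μ.prod μ)
      = ∫ z : α × α, ((f z.1 * g z.1) * 1 + 1 * (f z.2 * g z.2)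
          - f z.1 * g z.2 - g z.1 * f z.2) ∂(μ.prod μ) := by
    congr 1; funext z; ring
  have i12 : Integrable (fun z : α × α => (f z.1 * g z.1) * 1 + 1 * (f z.2 * g z.2))
      (μ.prod μ) := i1.add i2
  have i123 : Integrable (fun z : α × α =>
      (f z.1 * g z.1) * 1 + 1 * (f z.2 * g z.2) - f z.1 * g z.2) (μ.prod μ) := i12.sub i3
  rw [expand, integral_sub i123 i4, integral_sub i12 i3, integral_add i1 i2,
    integral_prod_mul (fun x => f x * g x) (fun _ => (1:ℝ)),
    integral_prod_mul (fun _ => (1:ℝ)) (fun x => f x * g x),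
    integral_prod_mul f g, integral_prod_mul g f] at key
  simp only [integral_const, measure_univ, probReal_univ, ENNReal.toReal_one, smul_eq_mul, one_mul,
    mul_one] at key
  nlinarith [key]

lemma harris (N : ℕ) : ∀ (X Y : (Fin N → ℝ) → ℝ), Measurable X → Measurable Y →
    (∀ x, 0 ≤ X x) → (∀ x, 0 ≤ Y x) → Monotone X → Monotone Y →
    (∫ x, X x ∂cube N) * (∫ x, Y x ∂cube N) ≤ ∫ x, X x * Y x ∂cube N := by
  induction N with
  | zero =>
    intro X Y _ _ _ _ _ _
    rw [integral_unique, integral_unique, integral_unique]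
    simp
  | succ n ih =>
    intro X Y hXm hYm hXp hYp hXmono hYmono
    set ρ : Measure ℝ := volume.restrict (Set.Icc 0 1) with hρ
    have hmp := (measurePreserving_piFinSuccAbove
      (fun _ : Fin (n+1) => volume.restrict (Set.Icc (0:ℝ) 1)) 0).symm
    have hemb := (MeasurableEquiv.piFinSuccAbove (fun _ : Fin (n+1) => ℝ) 0).symm.measurableEmbedding
    -- cons is monotone / measurable
    have hconsM : ∀ t : ℝ, Measurable (fun x : Fin n → ℝ => (Fin.cons t x : Fin (n+1) → ℝ)) := by
      intro t
      refine measurable_pi_iff.2 fun i => ?_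
      refine Fin.cases ?_ (fun j => ?_) i
      · exact (measurable_const : Measurable fun _ : Fin n → ℝ => t)
      · simpa [Fin.cons_succ] using measurable_pi_apply j
    have hconsMono : ∀ t : ℝ, Monotone (fun x : Fin n → ℝ => (Fin.cons t x : Fin (n+1) → ℝ)) := by
      intro t x y hxy i
      refine Fin.cases ?_ (fun j => ?_) i
      · simp
      · simpa [Fin.cons_succ] using hxy j
    have hconsMono' : ∀ s t : ℝ, s ≤ t → ∀ x : Fin n → ℝ,
        (Fin.cons s x : Fin (n+1) → ℝ) ≤ Fin.cons t x := by
      intro s t hst x i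
      refine Fin.cases ?_ (fun j => ?_) i
      · simpa using hst
      · simp
    -- transfer of integrals / integrability to the product space
    have hcomp : ∀ f : (Fin (n+1) → ℝ) → ℝ,
        ∫ x, f x ∂cube (n+1)
          = ∫ z : ℝ × (Fin n → ℝ), f (Fin.cons z.1 z.2) ∂(ρ.prod (cube n)) := by
      intro f
      rw [cube, ← hmp.integral_comp hemb f]
      congr 1
      funext z
      congr 1
      simp [MeasurableEquiv.piFinSuccAbove_symm_apply, Fin.insertNthEquiv, Fin.insertNth_zero]
    have hint : ∀ f : (Fin (n+1) → ℝ) → ℝ, Integrable f (cube (n+1)) →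
        Integrable (fun z : ℝ × (Fin n → ℝ) => f (Fin.cons z.1 z.2)) (ρ.prod (cube n)) := by
      intro f hf
      rw [cube] at hf
      have := (hmp.integrable_comp_emb hemb).2 hf
      have heq : (f ∘ (MeasurableEquiv.piFinSuccAbove (fun _ : Fin (n+1) => ℝ) 0).symm)
          = fun z : ℝ × (Fin n → ℝ) => f (Fin.cons z.1 z.2) := by
        funext z
        simp [Function.comp, MeasurableEquiv.piFinSuccAbove_symm_apply, Fin.insertNthEquiv,
          Fin.insertNth_zero]
      rwa [heq] at this
    -- integrability of X, Y, XY
    have hXYm : Measurable fun x => X x * Y x := hXm.mul hYm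
    have hXYp : ∀ x, 0 ≤ X x * Y x := fun x => mul_nonneg (hXp x) (hYp x)
    have hXYmono : Monotone fun x => X x * Y x := fun x y hxy =>
      mul_le_mul (hXmono hxy) (hYmono hxy) (hYp x) (hXp y)
    have IX := mono_integrable (n+1) X hXm hXp hXmono
    have IY := mono_integrable (n+1) Y hYm hYp hYmono
    have IXY := mono_integrable (n+1) _ hXYm hXYp hXYmono
    have IXc := hint X IX
    have IYc := hint Y IY
    have IXYc := hint _ IXY
    -- section functions
    set F : ℝ → ℝ := fun t => ∫ x, X (Fin.cons t x) ∂cube n with hF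
    set G : ℝ → ℝ := fun t => ∫ x, Y (Fin.cons t x) ∂cube n with hG
    set H : ℝ → ℝ := fun t => ∫ x, X (Fin.cons t x) * Y (Fin.cons t x) ∂cube n with hH
    have IXt : ∀ t, Integrable (fun x : Fin n → ℝ => X (Fin.cons t x)) (cube n) := fun t =>
      mono_integrable n _ (hXm.comp (hconsM t)) (fun x => hXp _)
        (fun x y hxy => hXmono (hconsMono t hxy))
    have IYt : ∀ t, Integrable (fun x : Fin n → ℝ => Y (Fin.cons t x)) (cube n) := fun t =>
      mono_integrable n _ (hYm.comp (hconsM t)) (fun x => hYp _)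
        (fun x y hxy => hYmono (hconsMono t hxy))
    have hFmono : Monotone F := by
      intro s t hst
      exact integral_mono (IXt s) (IXt t) fun x => hXmono (hconsMono' s t hst x)
    have hGmono : Monotone G := by
      intro s t hst
      exact integral_mono (IYt s) (IYt t) fun x => hYmono (hconsMono' s t hst x)
    have hIF : Integrable F ρ := IXc.integral_prod_left
    have hIG : Integrable G ρ := IYc.integral_prod_left
    have hIH : Integrable H ρ := IXYc.integral_prod_left
    -- bounds for F, G
    have hFnn : ∀ t, 0 ≤ F t := fun t => integral_nonneg fun x => hXp _
    have hGnn : ∀ t, 0 ≤ G t := fun t => integral_nonneg fun x => hYp _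
    have hFle : ∀ t ∈ Set.Icc (0:ℝ) 1, F t ≤ X (fun _ => 1) := by
      intro t ht
      have : F t ≤ ∫ _x, X (fun _ => 1) ∂cube n := by
        refine integral_mono_ae (IXt t) (integrable_const _) ?_
        filter_upwards [cube_ae n] with x hx
        refine hXmono fun i => ?_
        refine Fin.cases ?_ (fun j => ?_) i
        · simpa using ht.2
        · simpa using (hx j).2
      simpa using this
    have hGle : ∀ t ∈ Set.Icc (0:ℝ) 1, G t ≤ Y (fun _ => 1) := by
      intro t ht
      have : G t ≤ ∫ _x, Y (fun _ => 1) ∂cube n := by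
        refine integral_mono_ae (IYt t) (integrable_const _) ?_
        filter_upwards [cube_ae n] with x hx
        refine hYmono fun i => ?_
        refine Fin.cases ?_ (fun j => ?_) i
        · simpa using ht.2
        · simpa using (hx j).2
      simpa using this
    have hIFG : Integrable (fun t => F t * G t) ρ := by
      refine Integrable.mono' (integrable_const (X (fun _ => 1) * Y (fun _ => 1)))
        (hIF.aestronglyMeasurable.mul hIG.aestronglyMeasurable) ?_
      have : ∀ᵐ t ∂ρ, t ∈ Set.Icc (0:ℝ) 1 := ae_restrict_mem measurableSet_Icc
      filter_upwards [this] with t ht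
      rw [Real.norm_of_nonneg (mul_nonneg (hFnn t) (hGnn t))]
      exact mul_le_mul (hFle t ht) (hGle t ht) (hGnn t) (hXp _)
    -- main chain
    have e1 : ∫ x, X x ∂cube (n+1) = ∫ t, F t ∂ρ := by
      rw [hcomp X, integral_prod _ IXc]
    have e2 : ∫ x, Y x ∂cube (n+1) = ∫ t, G t ∂ρ := by
      rw [hcomp Y, integral_prod _ IYc]
    have e3 : ∫ x, X x * Y x ∂cube (n+1) = ∫ t, H t ∂ρ := by
      rw [hcomp fun x => X x * Y x, integral_prod _ IXYc]
    have step1 : ∫ t, F t * G t ∂ρ ≤ ∫ t, H t ∂ρ := by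
      refine integral_mono hIFG hIH fun t => ?_
      exact ih _ _ (hXm.comp (hconsM t)) (hYm.comp (hconsM t)) (fun x => hXp _)
        (fun x => hYp _) (fun x y hxy => hXmono (hconsMono t hxy))
        (fun x y hxy => hYmono (hconsMono t hxy))
    have step2 : (∫ t, F t ∂ρ) * (∫ t, G t ∂ρ) ≤ ∫ t, F t * G t ∂ρ := by
      refine cheb ρ F G hIF hIG hIFG fun s t => ?_
      rcases le_total s t with h | h
      · have h1 : F s - F t ≤ 0 := sub_nonpos.2 (hFmono h)
        have h2 : G s - G t ≤ 0 := sub_nonpos.2 (hGmono h)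
        nlinarith [mul_nonneg (neg_nonneg.2 h1) (neg_nonneg.2 h2)]
      · have h1 : 0 ≤ F s - F t := sub_nonneg.2 (hFmono h)
        have h2 : 0 ≤ G s - G t := sub_nonneg.2 (hGmono h)
        exact mul_nonneg h1 h2
    rw [e1, e2, e3]
    exact le_trans step2 step1

theorem fkg_two (N : ℕ) (X Y : (Fin N → ℝ) → ℝ)
    (hXmeas : Measurable X) (hYmeas : Measurable Y)
    (hXpos : ∀ x, 0 ≤ X x) (hYpos : ∀ x, 0 ≤ Y x)
    (hXmono : Monotone X) (hYmono : Monotone Y) :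
    (∫ x, X x ∂(Measure.pi fun _ : Fin N => volume.restrict (Set.Icc 0 1))) *
      (∫ x, Y x ∂(Measure.pi fun _ : Fin N => volume.restrict (Set.Icc 0 1))) ≤
    ∫ x, X x * Y x ∂(Measure.pi fun _ : Fin N => volume.restrict (Set.Icc 0 1)) := by
  exact harris N X Y hXmeas hYmeas hXpos hYpos hXmono hYmono
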